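/- arXiv:1804.02962 — 2 statements merged into one kernel-verified Lean document; each statement's English description precedes it below -/
import Mathlib

section
/- Suppose matrices satisfy $A\bar{V}_j = \bar{V}_{j+1}\bar{H}_{j+1,j} + \mathcal{F}_{j+1}\bar{\Delta}_{j+1,j}$, $\bar{Z}_j = \bar{V}_j\bar{G}_j + \Theta^v_j$, $A\bar{Z}_j = \bar{Z}_{j+1}\bar{B}_{j+1,j} + \Theta^z_j$, and the coefficient compatibility relation $\bar{G}_{j+1}\bar{B}_{j+1,j} = \bar{H}_{j+1,j}\bar{G}_j$, where $\bar{G}_j$ and $\bar{G}_{j+1}$ are invertible and $\bar{\Delta}_{j+1,j}$ has a left inverse $\bar{\Delta}^+_{j+1,j}$. Then the gap matrix satisfies $\mathcal{F}_{j+1} = (\Theta^z_j - A\Theta^v_j + \Theta^v_{j+1}\bar{B}_{j+1,j})\,\bar{G}_j^{-1}\,\bar{\Delta}^+_{j+1,j} + E$, where $E\bar{\Delta}_{j+1,j} = 0$; in particular if all matrices are uniquely determined by right multiplication by $\bar{\Delta}_{j+1,j}$ followed by $\bar{\Delta}^+_{j+1,j}$ (i.e. $\mathcal{F}_{j+1}\bar{\Delta}_{j+1,j}\bar{\Delta}^+_{j+1,j}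 = \mathcal{F}_{j+1}$), then $\mathcal{F}_{j+1} = (\Theta^z_j - A\Theta^v_j + \Theta^v_{j+1}\bar{B}_{j+1,j})\,\bar{G}_j^{-1}\,\bar{\Delta}^+_{j+1,j}$. -/
theorem stmt_6 (n j : ℕ) (A : Matrix (Fin n) (Fin n) ℝ)
    (V : Matrix (Fin n) (Fin j) ℝ) (V' : Matrix (Fin n) (Fin (j+1)) ℝ)
    (Z : Matrix (Fin n) (Fin j) ℝ) (Z' : Matrix (Fin n) (Fin (j+1)) ℝ)
    (H B Δ : Matrix (Fin (j+1)) (Fin j) ℝ)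
    (G : Matrix (Fin j) (Fin j) ℝ) (G' : Matrix (Fin (j+1)) (Fin (j+1)) ℝ)
    (Θv : Matrix (Fin n) (Fin j) ℝ) (Θv' : Matrix (Fin n) (Fin (j+1)) ℝ)
    (Θz : Matrix (Fin n) (Fin j) ℝ)
    (F : Matrix (Fin n) (Fin (j+1)) ℝ)
    (Δp : Matrix (Fin j) (Fin (j+1)) ℝ)
    (hAV : A * V = V' * H + F * Δ)
    (hZ : Z = V * G + Θv)
    (hZ' : Z' = V' * G' + Θv')
    (hAZ : A * Z = Z' * B + Θz)
    (hGB : G' * B = H * G)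
    (hGinv : IsUnit G) (hG'inv : IsUnit G')
    (hΔp : Δp * Δ = 1)
    (hcols : ∀ (i : Fin n) (k : Fin j), Θv' i (Fin.castSucc k) = Θv i k) :
    (∃ E : Matrix (Fin n) (Fin (j+1)) ℝ,
      F = (Θz - A * Θv + Θv' * B) * G⁻¹ * Δp + E ∧ E * Δ = 0) ∧
    (F * Δ * Δp = F → F = (Θz - A * Θv + Θv' * B) * G⁻¹ * Δp) := by
  have hdet : IsUnit G.det := (Matrix.isUnit_iff_isUnit_det G).mp hGinv
  have h1 : A * (V * G + Θv) = (V' * G' + Θv') * B + Θz := by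
    rw [← hZ, ← hZ', hAZ]
  have h2 : V' * H * G + (F * Δ * G + A * Θv)
      = V' * H * G + (Θv' * B + Θz) := by
    have := h1
    rw [Matrix.mul_add, ← Matrix.mul_assoc, hAV, Matrix.add_mul,
      Matrix.add_mul, Matrix.mul_assoc V' G' B, hGB, ← Matrix.mul_assoc] at this
    rw [← add_assoc, ← add_assoc, this]
  have h3 := add_left_cancel h2
  have key : F * Δ * G = Θz - A * Θv + Θv' * B := by
    have := eq_sub_of_add_eq h3
    rw [this]; abel
  have hFΔ : F * Δ = (Θz - A * Θv + Θv' * B) * G⁻¹ := by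
    rw [← key, Matrix.mul_assoc, Matrix.mul_nonsing_inv G hdet, Matrix.mul_one]
  constructor
  · refine ⟨F - (Θz - A * Θv + Θv' * B) * G⁻¹ * Δp, by abel, ?_⟩
    rw [Matrix.sub_mul, Matrix.mul_assoc _ Δp Δ, hΔp, Matrix.mul_one, hFΔ, sub_self]
  · intro hF
    rw [← hF, hFΔ]
end

section
/- Suppose $\bar{x}_j = \bar{x}_0 + \bar{V}_j y_j - \Theta^p_j y_j + \theta^x_j$ and $A\bar{V}_j = \bar{V}_{j+1}\bar{H}_{j+1,j} + \mathcal{F}_{j+1}\bar{\Delta}_{j+1,j}$, and define the recursive residual $\bar{r}_j = \bar{r}_0 - \bar{V}_{j+1}\bar{H}_{j+1,j} y_j$ where $\bar{r}_0 = b - A\bar{x}_0$. Then the true residual satisfies $b - A\bar{x}_j = \bar{r}_j - \mathcal{F}_{j+1}\bar{\Delta}_{j+1,j} y_j + A\Theta^p_j y_j - A\theta^x_j$. -/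
theorem stmt_18 (n j : ℕ) (A : Matrix (Fin n) (Fin n) ℝ) (b : Fin n → ℝ)
    (x0 xj r0 rj θx : Fin n → ℝ)
    (Vj Θp : Matrix (Fin n) (Fin j) ℝ) (Vj1 F : Matrix (Fin n) (Fin (j+1)) ℝ)
    (H Δ : Matrix (Fin (j+1)) (Fin j) ℝ) (y : Fin j → ℝ)
    (hx : xj = x0 + Vj.mulVec y - Θp.mulVec y + θx)
    (hAV : A * Vj = Vj1 * H + F * Δ)
    (hr0 : r0 = b - A.mulVec x0)
    (hr : rj = r0 - (Vj1 * H).mulVec y) :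
    b - A.mulVec xj =
      rj - (F * Δ).mulVec y + A.mulVec (Θp.mulVec y) - A.mulVec θx := by
  subst hx hr0 hr
  have h : A.mulVec (Vj.mulVec y) = (Vj1 * H).mulVec y + (F * Δ).mulVec y := by
    rw [Matrix.mulVec_mulVec, hAV, Matrix.add_mulVec]
  simp only [Matrix.mulVec_add, Matrix.mulVec_sub, h]
  abel
end
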